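/- Reachability is symmetric on core objects: let D be a finite set of points in a metric space, ε > 0, and minpts a natural number. If p ∈ D is a core object and p is reachable from q ∈ D (with regard to ε and minpts), then q is reachable from p. -/
import Mathlib


/-- The ε-neighborhood of `p` within `D`. -/
def epsNeighborhood {X : Type*} [MetricSpace X] (D : Set X) (ε : ℝ) (p : X) :
    Set X :=
  {x ∈ D | dist p x ≤ ε}

/-- `p` is a core object of `D` w.r.t. `ε` and `minpts`. -/
def IsCore {X : Type*} [MetricSpace X] (D : Set X) (ε : ℝ) (minpts : ℕ)
    (p : X) : Prop :=
  minpts ≤ (epsNeighborhood D ε p).ncard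

/-- `pi` is directly reachable from `pj` w.r.t. `ε` and `minpts`. -/
def DirectlyReachable {X : Type*} [MetricSpace X] (D : Set X) (ε : ℝ)
    (minpts : ℕ) (pi pj : X) : Prop :=
  pi ∈ epsNeighborhood D ε pj ∧ minpts ≤ (epsNeighborhood D ε pj).ncard

/-- `pi` is reachable from `pj`: there is a chain `c 0 = pi, …, c n = pj` of
objects of `D` such that `c m` is directly reachable from `c (m+1)`. -/
def ReachableFrom {X : Type*} [MetricSpace X] (D : Set X) (ε : ℝ)
    (minpts : ℕ) (pi pj : X) : Prop :=
  ∃ n : ℕ, ∃ c : Fin (n + 1) → X,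
    (∀ m, c m ∈ D) ∧ c 0 = pi ∧ c (Fin.last n) = pj ∧
    ∀ m : Fin n, DirectlyReachable D ε minpts (c m.castSucc) (c m.succ)

/-- Reachability is symmetric on core objects: if `p` is a core object and
`p` is reachable from `q`, then `q` is reachable from `p`. -/
theorem reachable_symm_of_core {X : Type*} [MetricSpace X]
    (D : Set X) (hD : D.Finite) (ε : ℝ) (hε : 0 < ε) (minpts : ℕ)
    (p q : X) (hp : p ∈ D) (hq : q ∈ D)
    (hpc : IsCore D ε minpts p)
    (h : ReachableFrom D ε minpts p q) :
    ReachableFrom D ε minpts q p := by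
  obtain ⟨n, c, hmem, h0, hl, hstep⟩ := h
  have hcore : ∀ m : Fin (n + 1), minpts ≤ (epsNeighborhood D ε (c m)).ncard := by
    intro m
    rcases Fin.eq_zero_or_eq_succ m with rfl | ⟨j, rfl⟩
    · rw [h0]; exact hpc
    · exact (hstep j).2
  refine ⟨n, fun k => c k.rev, fun m => hmem _, ?_, ?_, ?_⟩
  · simpa [Fin.rev_zero] using hl
  · simpa [Fin.rev_last] using h0
  · intro m
    have hs := hstep m.rev
    simp only [Fin.rev_castSucc, Fin.rev_succ]
    exact ⟨⟨hmem _, by rw [dist_comm]; exact hs.1.2⟩, hcore _⟩
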